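/- Let A be an algebra (over a field of characteristic zero) with a bilinear product satisfying w_d(a_1,...,a_d) = 0 for all a_1,...,a_d, where w_d is the sum of all distinct bracketings of the ordered word a_1···a_d. Then the symmetrized product a∘b = ab + ba satisfies the identity t_d = 0, where t_d(a_1,...,a_d) is the sum of all distinct multilinear monomials of degree d in the commutative magma generated by ∘. -/

import Mathlib

/-- `wb f fuel l`: fuel-based recursion computing the sum of all bracketings of the
ordered word given by `l`, using the binary operation `f`. -/
def wb {A : Type*} [AddCommMonoid A] (f : A → A → A) : ℕ → List A → A
  | 0, _ => 0
  | _ + 1, [a] => a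
  | fuel + 1, l =>
      ∑ i ∈ Finset.range (l.length - 1),
        f (wb f fuel (l.take (i + 1))) (wb f fuel (l.drop (i + 1)))

/-- `Wb f [a₁,…,aₙ] = wₙ(a₁,…,aₙ)`, the sum of all bracketings of the ordered word
`a₁⋯aₙ`; it satisfies `w₁(a)=a` and `wₙ = Σ_{i=1}^{n-1} wᵢ·w_{n-i}`. -/
def Wb {A : Type*} [AddCommMonoid A] (f : A → A → A) (l : List A) : A :=
  wb f l.length l

/-- `tb f fuel l`: fuel-based recursion computing the sum of all distinct multilinear
monomials on the entries of `l` for a commutative binary operation `f`: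
`tₙ = Σ_{I⊔J={1,…,n}, 1∈I, I,J≠∅} t_{|I|}(a_I)·t_{|J|}(a_J)`. -/
def tb {A : Type*} [AddCommMonoid A] (f : A → A → A) : ℕ → List A → A
  | 0, _ => 0
  | _ + 1, [a] => a
  | fuel + 1, l =>
      ∑ I ∈ (Finset.range l.length).powerset.filter
          (fun I => 0 ∈ I ∧ I ≠ Finset.range l.length),
        f (tb f fuel ((I.sort (· ≤ ·)).map (fun i => l.getD i 0)))
          (tb f fuel ((((Finset.range l.length) \ I).sort (· ≤ ·)).map (fun i => l.getD i 0)))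

/-- `Tb f [a₁,…,aₙ] = tₙ(a₁,…,aₙ)`, the sum of all distinct multilinear degree-`n`
monomials for the commutative product `f`. -/
def Tb {A : Type*} [AddCommMonoid A] (f : A → A → A) (l : List A) : A :=
  tb f l.length l


set_option linter.unusedSectionVars false

section Aux
variable {A : Type*} [AddCommMonoid A] (f : A → A → A)

lemma wb_cc (fuel : ℕ) (a b : A) (t : List A) :
    wb f (fuel+1) (a::b::t) = ∑ i ∈ Finset.range ((a::b::t).length - 1),
      f (wb f fuel ((a::b::t).take (i + 1))) (wb f fuel ((a::b::t).drop (i + 1))) := rfl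

lemma tb_cc (fuel : ℕ) (a b : A) (t : List A) :
    tb f (fuel+1) (a::b::t) = ∑ I ∈ (Finset.range (a::b::t).length).powerset.filter
          (fun I => 0 ∈ I ∧ I ≠ Finset.range (a::b::t).length),
        f (tb f fuel ((I.sort (· ≤ ·)).map (fun i => (a::b::t).getD i 0)))
          (tb f fuel ((((Finset.range (a::b::t).length) \ I).sort (· ≤ ·)).map
            (fun i => (a::b::t).getD i 0))) := rfl

lemma wb_fuel : ∀ (fuel : ℕ) (l : List A), l.length ≤ fuel → wb f fuel l = wb f l.length l := by
  intro fuel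
  induction fuel using Nat.strong_induction_on with
  | _ fuel IH =>
    intro l hl
    match fuel, l with
    | 0, l =>
      have h0 : l.length = 0 := Nat.le_zero.mp hl
      rw [h0]
    | fuel+1, [] => simp [wb]
    | fuel+1, [a] => rfl
    | fuel+1, a::b::t =>
      have hlen : (a::b::t).length = t.length + 1 + 1 := by simp
      rw [wb_cc, hlen, wb_cc]
      refine Finset.sum_congr rfl fun i hi => ?_
      simp only [Finset.mem_range, hlen] at hi hl ⊢
      have h1 : ((a::b::t).take (i+1)).length = i + 1 := by
        simp; omega
      have h2 : ((a::b::t).drop (i+1)).length = t.length + 2 - (i+1) := by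
        simp
      rw [IH fuel (Nat.lt_succ_self _) _ (by omega), IH (t.length+1) (by omega) _ (by omega),
        IH fuel (Nat.lt_succ_self _) ((a::b::t).drop (i+1)) (by omega),
        IH (t.length+1) (by omega) ((a::b::t).drop (i+1)) (by omega)]

lemma tb_fuel : ∀ (fuel : ℕ) (l : List A), l.length ≤ fuel → tb f fuel l = tb f l.length l := by
  intro fuel
  induction fuel using Nat.strong_induction_on with
  | _ fuel IH =>
    intro l hl
    match fuel, l with
    | 0, l =>
      have h0 : l.length = 0 := Nat.le_zero.mp hl
      rw [h0]
    | fuel+1, [] =>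
      simp [tb, Finset.filter_singleton]
      exact Finset.sum_eq_zero fun I hI => by
        obtain ⟨h1, h2, _⟩ := Finset.mem_filter.1 hI
        rw [Finset.mem_singleton.1 h1] at h2
        exact absurd h2 (Finset.notMem_empty 0)
    | fuel+1, [a] => rfl
    | fuel+1, a::b::t =>
      have hlen : (a::b::t).length = t.length + 1 + 1 := by simp
      rw [tb_cc, hlen, tb_cc]
      simp only [List.length_cons]
      refine Finset.sum_congr rfl fun I hI => ?_
      simp only [Finset.mem_filter, Finset.mem_powerset, hlen] at hI hl
      obtain ⟨hsub, h0I, hne⟩ := hI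
      have hcard : I.card < t.length + 1 + 1 := by
        have := Finset.card_lt_card (Finset.ssubset_iff_subset_ne.mpr ⟨hsub, hne⟩)
        simpa using this
      have hpos : 0 < I.card := Finset.card_pos.mpr ⟨0, h0I⟩
      have hc2 : (Finset.range (t.length+1+1) \ I).card = t.length + 1 + 1 - I.card := by
        rw [Finset.card_sdiff_of_subset hsub, Finset.card_range]
      have l1 : ((I.sort (· ≤ ·)).map (fun i => (a::b::t).getD i 0)).length = I.card := by
        simp
      have l2 : (((Finset.range (t.length+1+1) \ I).sort (· ≤ ·)).map
          (fun i => (a::b::t).getD i 0)).length = t.length + 1 + 1 - I.card := by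
        simp [hc2]
      rw [IH fuel (Nat.lt_succ_self _) _ (by omega), IH (t.length+1) (by omega) _ (by omega),
        IH fuel (Nat.lt_succ_self _)
          (((Finset.range (t.length+1+1) \ I).sort (· ≤ ·)).map (fun i => (a::b::t).getD i 0))
          (by omega),
        IH (t.length+1) (by omega)
          (((Finset.range (t.length+1+1) \ I).sort (· ≤ ·)).map (fun i => (a::b::t).getD i 0))
          (by omega)]

theorem take_ofFn' {n : ℕ} (g : Fin n → A) (k : ℕ) (hk : k ≤ n) :
    (List.ofFn g).take k = List.ofFn (fun j : Fin k => g (Fin.castLE hk j)) := by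
  apply List.ext_getElem
  · simp; omega
  · intro i h1 h2
    simp only [List.getElem_take, List.getElem_ofFn]
    congr 1

theorem drop_ofFn' {n : ℕ} (g : Fin n → A) (k : ℕ) :
    (List.ofFn g).drop k = List.ofFn (fun j : Fin (n - k) => g ⟨k + (j : ℕ), by omega⟩) := by
  apply List.ext_getElem
  · simp
  · intro i h1 h2
    simp only [List.getElem_drop, List.getElem_ofFn]

def menu {n : ℕ} (I : Finset (Fin n)) : Fin I.card → Fin n :=
  fun j => (I.sort (· ≤ ·)).get (Fin.cast (Finset.length_sort _).symm j)

lemma menu_mem {n : ℕ} (I : Finset (Fin n)) (j : Fin I.card) : menu I j ∈ I := by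
  have := (I.sort (· ≤ ·)).get_mem (Fin.cast (Finset.length_sort _).symm j)
  exact (Finset.mem_sort _).1 this

lemma menu_inj {n : ℕ} (I : Finset (Fin n)) : Function.Injective (menu I) := by
  intro a b h
  have hn := I.sort_nodup (· ≤ ·)
  have := List.nodup_iff_injective_get.1 hn h
  simpa [Fin.ext_iff] using this

lemma menu_surj {n : ℕ} (I : Finset (Fin n)) (y : Fin n) (hy : y ∈ I) :
    ∃ j, menu I j = y := by
  rw [← Finset.mem_sort (α := Fin n) (· ≤ ·)] at hy
  obtain ⟨⟨i, hi⟩, hg⟩ := List.mem_iff_get.1 hy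
  exact ⟨⟨i, by simpa using hi⟩, hg⟩

lemma Wb_eq_sum (l : List A) (hl : 2 ≤ l.length) :
    Wb f l = ∑ i ∈ Finset.range (l.length - 1),
      f (Wb f (l.take (i+1))) (Wb f (l.drop (i+1))) := by
  match l with
  | a :: b :: t =>
    show wb f ((a::b::t).length) _ = _
    have hlen : (a::b::t).length = t.length + 1 + 1 := by simp
    rw [hlen, wb_cc]
    simp only [List.length_cons]
    refine Finset.sum_congr rfl fun i hi => ?_
    simp only [Finset.mem_range] at hi
    rw [wb_fuel f (t.length+1) _ (by simp; omega),
        wb_fuel f (t.length+1) ((a::b::t).drop (i+1)) (by simp)]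
    rfl

lemma Tb_eq_sum (l : List A) (hl : 2 ≤ l.length) :
    Tb f l = ∑ I ∈ (Finset.range l.length).powerset.filter
        (fun I => 0 ∈ I ∧ I ≠ Finset.range l.length),
      f (Tb f ((I.sort (· ≤ ·)).map (fun i => l.getD i 0)))
        (Tb f (((Finset.range l.length \ I).sort (· ≤ ·)).map (fun i => l.getD i 0))) := by
  match l with
  | a :: b :: t =>
    show tb f ((a::b::t).length) _ = _
    have hlen : (a::b::t).length = t.length + 1 + 1 := by simp
    rw [hlen, tb_cc]
    simp only [List.length_cons]
    refine Finset.sum_congr rfl fun I hI => ?_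
    simp only [Finset.mem_filter, Finset.mem_powerset] at hI
    obtain ⟨hsub, h0I, hne⟩ := hI
    have hcard : I.card < t.length + 1 + 1 := by
      have := Finset.card_lt_card (Finset.ssubset_iff_subset_ne.mpr ⟨hsub, hne⟩)
      simpa using this
    have hpos : 0 < I.card := Finset.card_pos.mpr ⟨0, h0I⟩
    have hc2 : (Finset.range (t.length+1+1) \ I).card = t.length + 1 + 1 - I.card := by
      rw [Finset.card_sdiff_of_subset hsub, Finset.card_range]
    rw [tb_fuel f (t.length+1) _ (by simp; omega),
        tb_fuel f (t.length+1)
          (((Finset.range (t.length+1+1) \ I).sort (· ≤ ·)).map (fun i => (a::b::t).getD i 0))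
          (by rw [List.length_map, Finset.length_sort, hc2]; omega)]
    rfl
end Aux

section Key
variable {n : ℕ}

abbrev XK (n k : ℕ) :=
  Σ _I : {I : Finset (Fin n) // I.card = k}, Equiv.Perm (Fin k) × Equiv.Perm (Fin (n - k))

lemma card_compl_eq {k : ℕ} (I : {I : Finset (Fin n) // I.card = k}) :
    (I.1ᶜ).card = n - k := by
  rw [Finset.card_compl, I.2, Fintype.card_fin]

def fPhi (k : ℕ) (x : XK n k) : Fin n → Fin n := fun j =>
  if h : (j : ℕ) < k then menu x.1.1 (Fin.cast x.1.2.symm (x.2.1 ⟨j, h⟩))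
  else menu (x.1.1)ᶜ (Fin.cast (card_compl_eq x.1).symm (x.2.2 ⟨(j : ℕ) - k, by omega⟩))

lemma fPhi_inj (k : ℕ) (x : XK n k) : Function.Injective (fPhi k x) := by
  intro a b hab
  by_cases ha : (a : ℕ) < k <;> by_cases hb : (b : ℕ) < k
  · simp only [fPhi, dif_pos ha, dif_pos hb] at hab
    have h1 := menu_inj _ hab
    have h1' : ((x.2.1 ⟨a, ha⟩ : Fin k) : ℕ) = ((x.2.1 ⟨b, hb⟩ : Fin k) : ℕ) := by
      simpa [Fin.ext_iff] using h1
    have h3 := x.2.1.injective (Fin.ext h1')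
    have h4 : (a : ℕ) = (b : ℕ) := by simpa [Fin.ext_iff] using h3
    exact Fin.ext h4
  · exfalso
    simp only [fPhi, dif_pos ha, dif_neg hb] at hab
    have h1 := menu_mem x.1.1 (Fin.cast x.1.2.symm (x.2.1 ⟨a, ha⟩))
    have h2 := menu_mem (x.1.1)ᶜ (Fin.cast (card_compl_eq x.1).symm (x.2.2 ⟨(b : ℕ) - k, by omega⟩))
    rw [hab] at h1
    exact (Finset.mem_compl.1 h2) h1
  · exfalso
    simp only [fPhi, dif_neg ha, dif_pos hb] at hab
    have h1 := menu_mem x.1.1 (Fin.cast x.1.2.symm (x.2.1 ⟨b, hb⟩))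
    rw [← hab] at h1
    have h2 := menu_mem (x.1.1)ᶜ (Fin.cast (card_compl_eq x.1).symm (x.2.2 ⟨(a : ℕ) - k, by omega⟩))
    exact (Finset.mem_compl.1 h2) h1
  · simp only [fPhi, dif_neg ha, dif_neg hb] at hab
    have h1 := menu_inj _ hab
    have h1' : ((x.2.2 ⟨(a:ℕ)-k, by omega⟩ : Fin (n-k)) : ℕ)
        = ((x.2.2 ⟨(b:ℕ)-k, by omega⟩ : Fin (n-k)) : ℕ) := by
      simpa [Fin.ext_iff] using h1
    have h3 := x.2.2.injective (Fin.ext h1')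
    have h4 : (a:ℕ) - k = (b:ℕ) - k := by simpa [Fin.ext_iff] using h3
    exact Fin.ext (by omega)

noncomputable def Phi (k : ℕ) (x : XK n k) : Equiv.Perm (Fin n) :=
  Equiv.ofBijective _ (Finite.injective_iff_bijective.1 (fPhi_inj k x))

lemma Phi_comp_cast (k : ℕ) (hk : k ≤ n) (x : XK n k) (a : Fin k) :
    Phi k x (Fin.castLE hk a) = menu x.1.1 (Fin.cast x.1.2.symm (x.2.1 a)) :=
  dif_pos a.2

lemma Phi_comp_shift (k : ℕ) (x : XK n k) (b : Fin (n - k)) :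
    Phi k x (⟨k + (b : ℕ), by omega⟩ : Fin n)
      = menu (x.1.1)ᶜ (Fin.cast (card_compl_eq x.1).symm (x.2.2 b)) := by
  show fPhi k x _ = _
  unfold fPhi
  rw [dif_neg (show ¬ (k + (b : ℕ) < k) by omega)]
  have hb : (⟨k + (b : ℕ) - k, by omega⟩ : Fin (n - k)) = b :=
    Fin.ext (show k + (b : ℕ) - k = (b : ℕ) by omega)
  exact congrArg (fun z => menu _ (Fin.cast (card_compl_eq x.1).symm (x.2.2 z))) hb

lemma Phi_inj (k : ℕ) (hk : k ≤ n) : Function.Injective (Phi (n := n) k) := by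
  rintro ⟨⟨I, hI⟩, π, ρ⟩ ⟨⟨I', hI'⟩, π', ρ'⟩ h
  have hfun : ∀ j, Phi k ⟨⟨I, hI⟩, π, ρ⟩ j = Phi k ⟨⟨I', hI'⟩, π', ρ'⟩ j := fun j => by rw [h]
  have hchar : ∀ (J : Finset (Fin n)) (hJ : J.card = k) (σ τ) (z : Fin n),
      z ∈ J ↔ ∃ a : Fin k, Phi k ⟨⟨J, hJ⟩, σ, τ⟩ (Fin.castLE hk a) = z := by
    intro J hJ σ τ z
    constructor
    · intro hz
      obtain ⟨j0, hj0⟩ := menu_surj J z hz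
      refine ⟨σ.symm (Fin.cast hJ j0), ?_⟩
      rw [Phi_comp_cast k hk]
      simp only [Equiv.apply_symm_apply]
      simpa using hj0
    · rintro ⟨a, rfl⟩
      rw [Phi_comp_cast k hk]
      exact menu_mem _ _
  have hIeq : I = I' := by
    ext z
    rw [hchar I hI π ρ z, hchar I' hI' π' ρ' z]
    exact ⟨fun ⟨a, ha⟩ => ⟨a, by rw [← hfun]; exact ha⟩,
           fun ⟨a, ha⟩ => ⟨a, by rw [hfun]; exact ha⟩⟩
  subst hIeq
  have hπ : π = π' := by
    ext a
    have := hfun (Fin.castLE hk a)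
    rw [Phi_comp_cast k hk, Phi_comp_cast k hk] at this
    have h1 := menu_inj _ this
    simpa [Fin.ext_iff] using h1
  have hρ : ρ = ρ' := by
    ext b0
    have hblt : (b0 : ℕ) < n - k := b0.2
    have := hfun ⟨k + (b0 : ℕ), by omega⟩
    rw [Phi_comp_shift, Phi_comp_shift] at this
    have h1 := menu_inj _ this
    simpa [Fin.ext_iff] using h1
  subst hπ; subst hρ
  rfl

lemma Phi_bij (k : ℕ) (hk : k ≤ n) : Function.Bijective (Phi (n := n) k) := by
  rw [Fintype.bijective_iff_injective_and_card]
  refine ⟨Phi_inj k hk, ?_⟩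
  rw [Fintype.card_sigma]
  simp only [Fintype.card_prod, Fintype.card_perm, Fintype.card_fin]
  rw [Finset.sum_const, Finset.card_univ, Fintype.card_finset_len, Fintype.card_fin,
    smul_eq_mul, ← mul_assoc, Nat.choose_mul_factorial_mul_factorial hk]

lemma key_sum {A : Type*} [AddCommMonoid A] {n : ℕ} (k : ℕ) (hk : k ≤ n)
    (G : (Fin k → Fin n) → (Fin (n - k) → Fin n) → A) :
    ∑ σ : Equiv.Perm (Fin n),
        G (fun a => σ (Fin.castLE hk a)) (fun b => σ ⟨k + (b : ℕ), by omega⟩)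
      = ∑ x : XK n k,
          G (fun a => menu x.1.1 (Fin.cast x.1.2.symm (x.2.1 a)))
            (fun b => menu (x.1.1)ᶜ (Fin.cast (card_compl_eq x.1).symm (x.2.2 b))) := by
  refine (Fintype.sum_bijective (Phi (n := n) k) (Phi_bij k hk) _ _ ?_).symm
  intro x
  congr 1
  · funext a; rw [Phi_comp_cast k hk]
  · funext b; rw [Phi_comp_shift]

lemma range_eq_map (n : ℕ) :
    Finset.range n = Finset.map Fin.valEmbedding (Finset.univ : Finset (Fin n)) := by
  rw [Fin.map_valEmbedding_univ, Nat.Iio_eq_range]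

lemma sort_map_val {n : ℕ} (J : Finset (Fin n)) :
    (J.map Fin.valEmbedding).sort (· ≤ ·) = (J.sort (· ≤ ·)).map Fin.val := by
  refine (fun hp h1 h2 => List.Perm.eq_of_pairwise' (r := (· ≤ ·)) h1 h2 hp) ?_ ?_ ?_
  · rw [← Multiset.coe_eq_coe]
    calc (↑((J.map Fin.valEmbedding).sort (· ≤ ·)) : Multiset ℕ)
        = (J.map Fin.valEmbedding).val := Finset.sort_eq _ _
      _ = Multiset.map Fin.val J.val := Finset.map_val _ _
      _ = Multiset.map Fin.val (↑(J.sort (· ≤ ·)) : Multiset (Fin n)) := by rw [Finset.sort_eq]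
      _ = ↑((J.sort (· ≤ ·)).map Fin.val) := Multiset.map_coe _ _
  · exact Finset.pairwise_sort _ _
  · exact List.Pairwise.map _ (fun a b h => h) (Finset.pairwise_sort J (· ≤ ·))

lemma compl_map {n : ℕ} (J : Finset (Fin n)) :
    Finset.range n \ J.map Fin.valEmbedding = Jᶜ.map Fin.valEmbedding := by
  ext x
  simp only [Finset.mem_sdiff, Finset.mem_map, Finset.mem_range, Finset.mem_compl,
    Fin.valEmbedding_apply]
  constructor
  · rintro ⟨hx, hnx⟩
    exact ⟨⟨x, hx⟩, fun hmem => hnx ⟨⟨x, hx⟩, hmem, rfl⟩, rfl⟩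
  · rintro ⟨a, ha, rfl⟩
    exact ⟨a.2, fun ⟨b, hb, hba⟩ => ha ((Fin.ext hba) ▸ hb)⟩

lemma attachFin_map {n : ℕ} (s : Finset ℕ) (h : ∀ m ∈ s, m < n) :
    (s.attachFin h).map Fin.valEmbedding = s := by
  ext x
  simp only [Finset.mem_map, Finset.mem_attachFin, Fin.valEmbedding_apply]
  constructor
  · rintro ⟨a, ha, rfl⟩; exact ha
  · intro hx; exact ⟨⟨x, h x hx⟩, hx, rfl⟩

lemma S0_eq {n : ℕ} (hn : 0 < n) :
    ((Finset.range n).powerset.filter (fun I => 0 ∈ I ∧ I ≠ Finset.range n))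
      = (Finset.univ.filter
          (fun J : Finset (Fin n) => (⟨0, hn⟩ : Fin n) ∈ J ∧ J ≠ Finset.univ)).map
        ⟨fun J => J.map Fin.valEmbedding, Finset.map_injective _⟩ := by
  ext I
  simp only [Finset.mem_filter, Finset.mem_powerset, Finset.mem_map, Finset.mem_univ, true_and,
    Function.Embedding.coeFn_mk]
  constructor
  · rintro ⟨hsub, h0, hne⟩
    refine ⟨I.attachFin (fun m hm => Finset.mem_range.1 (hsub hm)), ⟨?_, ?_⟩, attachFin_map _ _⟩
    · exact (Finset.mem_attachFin _).2 h0
    · intro huniv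
      apply hne
      rw [← attachFin_map I (fun m hm => Finset.mem_range.1 (hsub hm)), huniv, ← range_eq_map]
  · rintro ⟨J, ⟨h0J, hJu⟩, rfl⟩
    refine ⟨?_, ?_, ?_⟩
    · rw [range_eq_map]; exact Finset.map_subset_map.2 (Finset.subset_univ J)
    · exact Finset.mem_map.2 ⟨⟨0, hn⟩, h0J, rfl⟩
    · intro he
      apply hJu
      apply Finset.map_injective Fin.valEmbedding
      rw [he, ← range_eq_map]

lemma subl_eq {A : Type*} [AddCommMonoid A] {n : ℕ} (v : Fin n → A) (J : Finset (Fin n)) :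
    ((J.map Fin.valEmbedding).sort (· ≤ ·)).map (fun i => (List.ofFn v).getD i 0)
      = List.ofFn (fun j : Fin J.card => v (menu J j)) := by
  rw [sort_map_val, List.map_map]
  apply List.ext_getElem
  · simp
  · intro i h1 h2
    simp only [List.getElem_map, List.getElem_ofFn, Function.comp_apply, Fin.valEmbedding_apply]
    have hi : i < (J.sort (· ≤ ·)).length := by simpa using h2
    rw [List.getD_eq_getElem _ _ (by
      simp only [List.length_ofFn]
      exact ((J.sort (· ≤ ·))[i]'hi).2)]
    rw [List.getElem_ofFn]
    rfl

lemma ofFn_eq_ofFn {α : Type*} {m m' : ℕ} (f : Fin m → α) (g : Fin m' → α) (h : m = m')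
    (hfg : ∀ (j : ℕ) (h1 : j < m) (h2 : j < m'), f ⟨j, h1⟩ = g ⟨j, h2⟩) :
    List.ofFn f = List.ofFn g := by
  apply List.ext_getElem (by simp [h])
  intro i hi1 hi2
  simp only [List.getElem_ofFn]
  exact hfg i (by simpa using hi1) (by simpa using hi2)
end Key

section Main
variable {A : Type*} [NonUnitalNonAssocRing A]

theorem take_ofFn'' {α : Type*} {n : ℕ} (g : Fin n → α) (k : ℕ) :
    (List.ofFn g).take k
      = List.ofFn (fun j : Fin (min k n) => g (Fin.castLE (min_le_right k n) j)) := by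
  apply List.ext_getElem
  · simp
  · intro i h1 h2
    simp only [List.getElem_take, List.getElem_ofFn]
    congr 1

/-- `Tt v J`: the `Tb`-value on the subfamily indexed by `J`, in sorted order. -/
noncomputable def Tt {n : ℕ} (v : Fin n → A) (J : Finset (Fin n)) : A :=
  Tb (fun a b => a * b + b * a) (List.ofFn (fun j : Fin J.card => v (menu J j)))

theorem step_lemma (n : ℕ) (hn : 2 ≤ n)
    (IH : ∀ k, k < n → ∀ (w : Fin k → A),
      ∑ σ : Equiv.Perm (Fin k), Wb (· * ·) (List.ofFn (fun j => w (σ j)))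
        = Tb (fun a b => a * b + b * a) (List.ofFn w))
    (v : Fin n → A) :
    ∑ σ : Equiv.Perm (Fin n), Wb (· * ·) (List.ofFn (fun j => v (σ j)))
      = Tb (fun a b => a * b + b * a) (List.ofFn v) := by
  have h0n : 0 < n := by omega
  -- the three index families
  set Xall : Finset (Finset (Fin n)) :=
    Finset.univ.filter (fun J : Finset (Fin n) => J ≠ ∅ ∧ J ≠ Finset.univ) with hXall
  set Y0 : Finset (Finset (Fin n)) :=
    Finset.univ.filter (fun J : Finset (Fin n) => (⟨0, h0n⟩ : Fin n) ∈ J ∧ J ≠ Finset.univ)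
    with hY0
  set Z0 : Finset (Finset (Fin n)) :=
    Finset.univ.filter (fun J : Finset (Fin n) => (⟨0, h0n⟩ : Fin n) ∉ J ∧ J ≠ ∅) with hZ0
  -- RHS
  have hR : Tb (fun a b : A => a * b + b * a) (List.ofFn v)
      = ∑ J ∈ Y0, (Tt v J * Tt v Jᶜ + Tt v Jᶜ * Tt v J) := by
    rw [Tb_eq_sum _ _ (by simpa using hn)]
    simp only [List.length_ofFn]
    rw [S0_eq h0n, Finset.sum_map]
    refine Finset.sum_congr rfl fun J hJ => ?_
    simp only [Function.Embedding.coeFn_mk]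
    rw [compl_map, subl_eq, subl_eq]
    rfl
  -- reindex the swapped half by complements
  have hcompl : ∑ J ∈ Y0, Tt v Jᶜ * Tt v J = ∑ J ∈ Z0, Tt v J * Tt v Jᶜ := by
    refine Finset.sum_nbij' (fun J => Jᶜ) (fun J => Jᶜ) ?_ ?_ ?_ ?_ ?_
    · intro J hJ
      simp only [hY0, hZ0, Finset.mem_filter, Finset.mem_univ, true_and] at hJ ⊢
      refine ⟨fun hc => (Finset.mem_compl.1 hc) hJ.1, ?_⟩
      rw [Ne, Finset.compl_eq_empty_iff]; exact hJ.2
    · intro J hJ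
      simp only [hY0, hZ0, Finset.mem_filter, Finset.mem_univ, true_and] at hJ ⊢
      refine ⟨Finset.mem_compl.2 hJ.1, ?_⟩
      intro hc
      apply hJ.2
      rw [← compl_compl J, hc, Finset.compl_univ]
    · intro J _; exact compl_compl J
    · intro J _; exact compl_compl J
    · intro J _; rw [compl_compl]
  -- partition Xall by membership of 0
  have hY0f : Y0 = Xall.filter (fun J => (⟨0, h0n⟩ : Fin n) ∈ J) := by
    ext J
    simp only [hY0, hXall, Finset.mem_filter, Finset.mem_univ, true_and]
    constructor
    · rintro ⟨h0, hu⟩; exact ⟨⟨Finset.ne_empty_of_mem h0, hu⟩, h0⟩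
    · rintro ⟨⟨_, hu⟩, h0⟩; exact ⟨h0, hu⟩
  have hZ0f : Z0 = Xall.filter (fun J => ¬ (⟨0, h0n⟩ : Fin n) ∈ J) := by
    ext J
    simp only [hZ0, hXall, Finset.mem_filter, Finset.mem_univ, true_and]
    constructor
    · rintro ⟨h0, hne⟩
      exact ⟨⟨hne, fun hu => h0 (hu ▸ Finset.mem_univ _)⟩, h0⟩
    · rintro ⟨⟨hne, _⟩, h0⟩; exact ⟨h0, hne⟩
  have hsplit : ∑ J ∈ Y0, (Tt v J * Tt v Jᶜ + Tt v Jᶜ * Tt v J)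
      = ∑ J ∈ Xall, Tt v J * Tt v Jᶜ := by
    rw [Finset.sum_add_distrib, hcompl, hY0f, hZ0f]
    exact Finset.sum_filter_add_sum_filter_not _ _ _
  -- LHS: expand each Wb
  have hWσ : ∀ σ : Equiv.Perm (Fin n), Wb (· * ·) (List.ofFn (fun j => v (σ j)))
      = ∑ i ∈ Finset.range (n - 1),
          Wb (· * ·) (List.ofFn
              (fun a : Fin (min (i+1) n) => v (σ (Fin.castLE (min_le_right (i+1) n) a))))
          * Wb (· * ·) (List.ofFn
              (fun b : Fin (n - (i+1)) => v (σ ⟨(i+1) + (b : ℕ), by omega⟩))) := by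
    intro σ
    rw [Wb_eq_sum _ _ (by simpa using hn)]
    simp only [List.length_ofFn]
    refine Finset.sum_congr rfl fun i hi => ?_
    rw [take_ofFn'', drop_ofFn']
  have hL : ∑ σ : Equiv.Perm (Fin n), Wb (· * ·) (List.ofFn (fun j => v (σ j)))
      = ∑ i ∈ Finset.range (n - 1), ∑ J ∈ Finset.powersetCard (i+1) Finset.univ,
          Tt v J * Tt v Jᶜ := by
    rw [Finset.sum_congr rfl (fun σ _ => hWσ σ), Finset.sum_comm]
    refine Finset.sum_congr rfl fun i hi => ?_
    simp only [Finset.mem_range] at hi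
    have hk : i + 1 ≤ n := by omega
    have hmin : ∀ σ : Equiv.Perm (Fin n),
        List.ofFn (fun a : Fin (min (i+1) n) => v (σ (Fin.castLE (min_le_right (i+1) n) a)))
        = List.ofFn (fun a : Fin (i+1) => v (σ (Fin.castLE hk a))) :=
      fun σ => ofFn_eq_ofFn _ _ (by omega) (fun j h1 h2 => rfl)
    rw [Finset.sum_congr rfl (fun σ _ => by rw [hmin σ])]
    have hkey := key_sum (A := A) (n := n) (i+1) hk
      (fun p q => Wb (· * ·) (List.ofFn (v ∘ p)) * Wb (· * ·) (List.ofFn (v ∘ q)))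
    refine Eq.trans ?_ (hkey.trans ?_)
    · exact Finset.sum_congr rfl (fun σ _ => rfl)
    · rw [← Finset.univ_sigma_univ, Finset.sum_sigma]
      have hsub : ∀ I : {I : Finset (Fin n) // I.card = i + 1},
          (∑ y : Equiv.Perm (Fin (i+1)) × Equiv.Perm (Fin (n - (i+1))),
            Wb (· * ·) (List.ofFn (v ∘ fun a => menu I.1 (Fin.cast I.2.symm (y.1 a))))
            * Wb (· * ·) (List.ofFn (v ∘ fun b =>
                menu I.1ᶜ (Fin.cast (card_compl_eq I).symm (y.2 b)))))
          = Tt v I.1 * Tt v I.1ᶜ := by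
        intro I
        rw [Fintype.sum_prod_type]
        show (∑ x : Equiv.Perm (Fin (i+1)), ∑ y : Equiv.Perm (Fin (n - (i+1))),
            Wb (· * ·) (List.ofFn (v ∘ fun a => menu I.1 (Fin.cast I.2.symm (x a))))
            * Wb (· * ·) (List.ofFn (v ∘ fun b =>
                menu I.1ᶜ (Fin.cast (card_compl_eq I).symm (y b))))) = _
        rw [← Finset.sum_mul_sum]
        congr 1
        · have hIH := IH (i+1) (by omega)
            (fun a : Fin (i+1) => v (menu I.1 (Fin.cast I.2.symm a)))
          refine Eq.trans ?_ (hIH.trans ?_)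
          · exact Finset.sum_congr rfl (fun π _ => rfl)
          · show Tb _ _ = Tb _ _
            congr 1
            exact ofFn_eq_ofFn _ _ (by rw [I.2]) (fun j h1 h2 => rfl)
        · have hIH := IH (n - (i+1)) (by omega)
            (fun b : Fin (n - (i+1)) => v (menu I.1ᶜ (Fin.cast (card_compl_eq I).symm b)))
          refine Eq.trans ?_ (hIH.trans ?_)
          · exact Finset.sum_congr rfl (fun ρ _ => rfl)
          · show Tb _ _ = Tb _ _
            congr 1
            exact ofFn_eq_ofFn _ _ (by rw [card_compl_eq I]) (fun j h1 h2 => rfl)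
      rw [Finset.sum_congr rfl (fun I _ => hsub I)]
      exact (Finset.sum_subtype (Finset.powersetCard (i+1) Finset.univ)
        (fun J => Finset.mem_powersetCard_univ) (fun J => Tt v J * Tt v Jᶜ)).symm
  -- combine the double sum into a single sum over Xall
  have hmaps : ∀ J ∈ Xall, J.card - 1 ∈ Finset.range (n - 1) := by
    intro J hJ
    simp only [hXall, Finset.mem_filter, Finset.mem_univ, true_and] at hJ
    have h1 : 0 < J.card := Finset.card_pos.mpr (Finset.nonempty_iff_ne_empty.mpr hJ.1)
    have h2 : J.card < n := by
      have := Finset.card_lt_card (Finset.ssubset_univ_iff.mpr hJ.2)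
      simpa using this
    simp only [Finset.mem_range]; omega
  have hfib : ∑ i ∈ Finset.range (n - 1), ∑ J ∈ Finset.powersetCard (i+1) Finset.univ,
        Tt v J * Tt v Jᶜ
      = ∑ J ∈ Xall, Tt v J * Tt v Jᶜ := by
    rw [← Finset.sum_fiberwise_of_maps_to hmaps (fun J => Tt v J * Tt v Jᶜ)]
    refine Finset.sum_congr rfl fun i hi => ?_
    simp only [Finset.mem_range] at hi
    refine Finset.sum_congr ?_ (fun _ _ => rfl)
    ext J
    simp only [hXall, Finset.mem_powersetCard_univ, Finset.mem_filter, Finset.mem_univ, true_and]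
    constructor
    · intro hc
      have h1 : J ≠ ∅ := by
        intro h; rw [h] at hc; simp at hc
      have h2 : J ≠ Finset.univ := by
        intro h
        rw [h, Finset.card_univ, Fintype.card_fin] at hc
        omega
      exact ⟨⟨h1, h2⟩, by omega⟩
    · rintro ⟨⟨hne, hnu⟩, hci⟩
      have : 0 < J.card := Finset.card_pos.mpr (Finset.nonempty_iff_ne_empty.mpr hne)
      omega
  rw [hL, hfib, hR, hsplit]

theorem main_sum : ∀ (n : ℕ) (v : Fin n → A),
    ∑ σ : Equiv.Perm (Fin n), Wb (· * ·) (List.ofFn (fun j => v (σ j)))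
      = Tb (fun a b => a * b + b * a) (List.ofFn v) := by
  intro n
  induction n using Nat.strong_induction_on with
  | _ n IH =>
  intro v
  rcases n with _ | _ | m
  · simp [List.ofFn_zero, Wb, Tb, wb, tb]
  · have h1 : ∀ σ : Equiv.Perm (Fin 1), (List.ofFn fun j => v (σ j)) = List.ofFn v := by
      intro σ; congr 1; funext j; rw [Subsingleton.elim (σ j) j]
    rw [Finset.sum_congr rfl (fun σ _ => congrArg (Wb (· * ·)) (h1 σ)), Finset.sum_const,
      Finset.card_univ, Fintype.card_perm, Fintype.card_fin]
    simp only [Nat.factorial_one, one_smul]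
    have h2 : List.ofFn v = [v 0] := by simp [List.ofFn_succ]
    rw [h2]; rfl
  · exact step_lemma (m + 2) (by omega) (fun k hk w => IH k hk w) v

end Main


/-- If an algebra over `ℚ` satisfies the identity `w_d = 0` (the sum of all
bracketings of the ordered word `a₁⋯a_d` vanishes), then the symmetrized product
`a∘b = ab + ba` satisfies the identity `t_d = 0` (the sum of all distinct
multilinear degree-`d` monomials of the commutative magma `∘` vanishes). -/
theorem symmetrized_td_of_wd {A : Type*} [NonUnitalNonAssocRing A]
    [Module ℚ A] [SMulCommClass ℚ A A] [IsScalarTower ℚ A A] (d : ℕ)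
    (h : ∀ l : List A, l.length = d → Wb (· * ·) l = 0) :
    ∀ l : List A, l.length = d → Tb (fun a b => a * b + b * a) l = 0 := by
  intro l hl
  have hm := main_sum l.length l.get
  rw [List.ofFn_get] at hm
  rw [← hm]
  exact Finset.sum_eq_zero fun σ _ => h _ (by simp [hl])
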